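/- In the same setting (g, s nonzero, D = diag(‖g‖,‖s‖), H symmetric 2×2 with c1 I ⪯ D⁻¹HD⁻¹ ⪯ c2 I, (α,β) solving H(α,β)ᵀ = (‖g‖², −gᵀs)ᵀ, d = −αg + βs), one has ‖d‖ ≤ (2/c1)‖g‖. -/

import Mathlib

open Matrix

set_option maxHeartbeats 1000000 in
theorem scaled_norm_upper_bound
    (n : ℕ) (g s : Fin n → ℝ) (hg : g ≠ 0) (hs : s ≠ 0)
    (c₁ c₂ : ℝ) (hc₁ : 0 < c₁) (hc : c₁ ≤ c₂)
    (D : Matrix (Fin 2) (Fin 2) ℝ)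
    (hD : D = Matrix.diagonal ![Real.sqrt (g ⬝ᵥ g), Real.sqrt (s ⬝ᵥ s)])
    (H : Matrix (Fin 2) (Fin 2) ℝ) (hHsymm : H.IsSymm)
    (hH : ∀ x : Fin 2 → ℝ, c₁ * (x ⬝ᵥ x) ≤ x ⬝ᵥ ((D⁻¹ * H * D⁻¹) *ᵥ x) ∧
      x ⬝ᵥ ((D⁻¹ * H * D⁻¹) *ᵥ x) ≤ c₂ * (x ⬝ᵥ x))
    (α β : ℝ) (hαβ : H *ᵥ ![α, β] = ![g ⬝ᵥ g, -(g ⬝ᵥ s)])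
    (d : Fin n → ℝ) (hd : d = (-α) • g + β • s) :
    Real.sqrt (d ⬝ᵥ d) ≤ (2/c₁) * Real.sqrt (g ⬝ᵥ g) := by
  set G := g ⬝ᵥ g with hGdef
  set S := s ⬝ᵥ s with hSdef
  set P := g ⬝ᵥ s with hPdef
  have hGnn : 0 ≤ G := Finset.sum_nonneg fun i _ => mul_self_nonneg _
  have hSnn : 0 ≤ S := Finset.sum_nonneg fun i _ => mul_self_nonneg _
  have hddnn : 0 ≤ d ⬝ᵥ d := Finset.sum_nonneg fun i _ => mul_self_nonneg _
  have hG : 0 < G := by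
    rcases lt_or_eq_of_le hGnn with h | h
    · exact h
    · exact absurd ((dotProduct_self_eq_zero).mp h.symm) hg
  have hS : 0 < S := by
    rcases lt_or_eq_of_le hSnn with h | h
    · exact h
    · exact absurd ((dotProduct_self_eq_zero).mp h.symm) hs
  have hsg : 0 < Real.sqrt G := Real.sqrt_pos.mpr hG
  have hss : 0 < Real.sqrt S := Real.sqrt_pos.mpr hS
  have hsgsq : Real.sqrt G * Real.sqrt G = G := Real.mul_self_sqrt hG.le
  have hsssq : Real.sqrt S * Real.sqrt S = S := Real.mul_self_sqrt hS.le
  -- inverse of D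
  have hDinv : D⁻¹ = Matrix.diagonal ![(Real.sqrt G)⁻¹, (Real.sqrt S)⁻¹] := by
    apply Matrix.inv_eq_right_inv
    rw [hD, Matrix.diagonal_mul_diagonal]
    ext i j
    fin_cases i <;> fin_cases j <;>
      simp [Matrix.diagonal, mul_inv_cancel₀ hsg.ne', mul_inv_cancel₀ hss.ne', Matrix.one_apply]
  -- symmetry
  have hsym : H 1 0 = H 0 1 := by
    have := congrFun (congrFun hHsymm 0) 1
    simpa [Matrix.transpose_apply] using this
  -- equations from hαβ
  have he0 : H 0 0 * α + H 0 1 * β = G := by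
    have := congrFun hαβ 0
    simpa [Matrix.mulVec, dotProduct, Fin.sum_univ_two] using this
  have he1 : H 1 0 * α + H 1 1 * β = -P := by
    have := congrFun hαβ 1
    simpa [Matrix.mulVec, dotProduct, Fin.sum_univ_two] using this
  -- quadratic form bound
  have hq := (hH ![α * Real.sqrt G, β * Real.sqrt S]).1
  have hqL : c₁ * (α ^ 2 * G + β ^ 2 * S) ≤ α * G - β * P := by
    have hxx : (![α * Real.sqrt G, β * Real.sqrt S] : Fin 2 → ℝ) ⬝ᵥ
        ![α * Real.sqrt G, β * Real.sqrt S] = α ^ 2 * G + β ^ 2 * S := by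
      simp [dotProduct, Fin.sum_univ_two]
      nlinarith [hsgsq, hsssq]
    have hform : (![α * Real.sqrt G, β * Real.sqrt S] : Fin 2 → ℝ) ⬝ᵥ
        ((D⁻¹ * H * D⁻¹) *ᵥ ![α * Real.sqrt G, β * Real.sqrt S])
        = α * (H 0 0 * α + H 0 1 * β) + β * (H 1 0 * α + H 1 1 * β) := by
      rw [hDinv]
      obtain ⟨u, hu, hune⟩ : ∃ u, Real.sqrt G = u ∧ u ≠ 0 := ⟨_, rfl, hsg.ne'⟩
      obtain ⟨v, hv, hvne⟩ : ∃ v, Real.sqrt S = v ∧ v ≠ 0 := ⟨_, rfl, hss.ne'⟩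
      rw [hu, hv]
      simp only [Matrix.mulVec, Matrix.mul_apply, dotProduct, Fin.sum_univ_two,
        Matrix.diagonal, Matrix.of_apply, Matrix.cons_val', Matrix.cons_val_zero,
        Matrix.cons_val_one, Matrix.head_cons, Matrix.empty_val',
        Matrix.cons_val_fin_one, Matrix.head_fin_const]
      simp only [if_true, if_false, Fin.one_eq_zero_iff, Fin.zero_eq_one_iff,
        Nat.succ_ne_self, ite_true, ite_false, reduceIte]
      field_simp
      ring
    rw [hxx, hform, he0, he1] at hq
    linarith
  -- dot products with d
  have hgd : g ⬝ᵥ d = -α * G + β * P := by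
    rw [hd]
    simp [dotProduct_add, dotProduct_smul, smul_eq_mul]
    rfl
  have hdd : d ⬝ᵥ d = α ^ 2 * G - 2 * α * β * P + β ^ 2 * S := by
    rw [hd]
    simp only [add_dotProduct, dotProduct_add, smul_dotProduct,
      dotProduct_smul, smul_eq_mul, dotProduct_comm s g]
    rw [← hGdef, ← hSdef, ← hPdef]
    ring
  -- Cauchy–Schwarz
  have hcsP : P ^ 2 ≤ G * S := by
    simpa [hGdef, hSdef, hPdef, dotProduct, pow_two] using
      Finset.sum_mul_sq_le_sq_mul_sq Finset.univ g s
  have hcsd : (g ⬝ᵥ d) ^ 2 ≤ G * (d ⬝ᵥ d) := by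
    simpa [hGdef, dotProduct, pow_two, mul_pow] using
      Finset.sum_mul_sq_le_sq_mul_sq Finset.univ g d
  have hstep : -(g ⬝ᵥ d) ≤ Real.sqrt G * Real.sqrt (d ⬝ᵥ d) := by
    have h1 : -(g ⬝ᵥ d) ≤ |g ⬝ᵥ d| := neg_le_abs _
    have h2 : |g ⬝ᵥ d| ≤ Real.sqrt (G * (d ⬝ᵥ d)) := by
      rw [← Real.sqrt_sq_eq_abs]
      exact Real.sqrt_le_sqrt hcsd
    rw [Real.sqrt_mul hG.le] at h2
    linarith
  -- d⬝d ≤ 2(α²G + β²S)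
  have habsP : |P| ≤ Real.sqrt G * Real.sqrt S := by
    have h1 : |P| = Real.sqrt (P ^ 2) := (Real.sqrt_sq_eq_abs P).symm
    rw [h1]
    calc Real.sqrt (P ^ 2) ≤ Real.sqrt (G * S) := Real.sqrt_le_sqrt hcsP
      _ = Real.sqrt G * Real.sqrt S := Real.sqrt_mul hGnn S
  have hdd2 : d ⬝ᵥ d ≤ 2 * (α ^ 2 * G + β ^ 2 * S) := by
    have key : 2 * |α| * |β| * (Real.sqrt G * Real.sqrt S) ≤ α ^ 2 * G + β ^ 2 * S := by
      nlinarith [sq_nonneg (|α| * Real.sqrt G - |β| * Real.sqrt S), sq_abs α, sq_abs β,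
        hsgsq, hsssq]
    have key2 : -(2 * α * β * P) ≤ 2 * |α| * |β| * |P| := by
      calc -(2 * α * β * P) ≤ |2 * α * β * P| := neg_le_abs _
        _ = 2 * |α| * |β| * |P| := by rw [abs_mul, abs_mul, abs_mul]; simp
    have key3 : 2 * |α| * |β| * |P| ≤ 2 * |α| * |β| * (Real.sqrt G * Real.sqrt S) := by
      apply mul_le_mul_of_nonneg_left habsP (by positivity)
    rw [hdd]; linarith
  -- combine
  have hmain : c₁ * (d ⬝ᵥ d) ≤ 2 * (Real.sqrt G * Real.sqrt (d ⬝ᵥ d)) := by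
    have h1 : c₁ / 2 * (d ⬝ᵥ d) ≤ α * G - β * P := by
      calc c₁ / 2 * (d ⬝ᵥ d) ≤ c₁ / 2 * (2 * (α ^ 2 * G + β ^ 2 * S)) :=
            mul_le_mul_of_nonneg_left hdd2 (by positivity)
        _ = c₁ * (α ^ 2 * G + β ^ 2 * S) := by ring
        _ ≤ α * G - β * P := hqL
    have h2 : α * G - β * P = -(g ⬝ᵥ d) := by rw [hgd]; ring
    rw [h2] at h1
    linarith
  have hT : 0 ≤ Real.sqrt (d ⬝ᵥ d) := Real.sqrt_nonneg _
  have hTT : Real.sqrt (d ⬝ᵥ d) * Real.sqrt (d ⬝ᵥ d) = d ⬝ᵥ d := Real.mul_self_sqrt hddnn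
  rcases eq_or_lt_of_le hT with h0 | h0
  · rw [← h0]; positivity
  · have hkey : c₁ * Real.sqrt (d ⬝ᵥ d) ≤ 2 * Real.sqrt G := by
      nlinarith [hmain, hTT, h0]
    rw [div_mul_eq_mul_div, le_div_iff₀ hc₁]
    linarith
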